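/- Let 𝔤 be a Lie algebra over a field F of characteristic ≠ 2 and x, y extremal elements with extremal form value g(x,y) ≠ 0. Then the set of extremal points of 𝔤 contained in the subalgebra ⟨x,y⟩ ≅ sl₂(F) forms a conic in the projective plane on ⟨x,y⟩: with respect to the basis (g(x,y)x, y, [x,y]), a 1-space spanned by αg(x,y)x + βy + γ[x,y] consists of extremal elements if and only if αβ = γ². In particular, every projective line of this plane meets the set of extremal points in at most two points. -/

import Mathlib

private lemma prop19 {F : Type*} [Field F] (h2 : (2:F) ≠ 0) (l a b c a' b' c' : F) (hl : l ≠ 0)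
    (hp : a*b = l*c^2) (hq : a'*b' = l*c'^2) (hB : a*b' + a'*b = 2*(l*(c*c')))
    (hne : ¬(a = 0 ∧ b = 0 ∧ c = 0)) : ∃ μ : F, a' = μ*a ∧ b' = μ*b ∧ c' = μ*c := by
  have hsq : (a*b' - a'*b)^2 = 0 := by
    linear_combination (a*b' + a'*b + 2*(l*(c*c')))*hB - 4*a'*b'*hp - 4*(l*c^2)*hq
  have hde : a*b' = a'*b := by
    have h := pow_eq_zero_iff (n := 2) (by norm_num) |>.mp hsq
    linear_combination h
  have hab' : a*b' = l*(c*c') := by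
    have h1 : 2*(a*b' - l*(c*c')) = 0 := by linear_combination hB + hde
    rcases mul_eq_zero.mp h1 with h|h
    · exact absurd h h2
    · linear_combination h
  have ha'b : a'*b = l*(c*c') := by rw [← hde]; exact hab'
  by_cases hA : a = 0
  · have hc : c = 0 := by
      have h1 : l*c^2 = 0 := by rw [← hp, hA, zero_mul]
      rcases mul_eq_zero.mp h1 with h|h
      · exact absurd h hl
      · exact pow_eq_zero_iff (n := 2) (by norm_num) |>.mp h
    have hb : b ≠ 0 := fun hb => hne ⟨hA, hb, hc⟩
    have ha' : a' = 0 := by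
      have h1 : a'*b = 0 := by rw [ha'b, hc]; ring
      rcases mul_eq_zero.mp h1 with h|h
      · exact h
      · exact absurd h hb
    have hc' : c' = 0 := by
      have h1 : l*c'^2 = 0 := by rw [← hq, ha', zero_mul]
      rcases mul_eq_zero.mp h1 with h|h
      · exact absurd h hl
      · exact pow_eq_zero_iff (n := 2) (by norm_num) |>.mp h
    exact ⟨b'/b, by rw [ha', hA]; ring, by field_simp, by rw [hc, hc']; ring⟩
  · refine ⟨a'/a, by field_simp [mul_comm], ?_, ?_⟩
    · field_simp
      linear_combination hde
    · by_cases hc : c = 0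
      · have hb : b = 0 := by
          have h1 : a*b = 0 := by rw [hp, hc]; ring
          rcases mul_eq_zero.mp h1 with h|h
          exacts [absurd h hA, h]
        have hb' : b' = 0 := by
          have h1 : a*b' = 0 := by rw [hab', hc]; ring
          rcases mul_eq_zero.mp h1 with h|h
          exacts [absurd h hA, h]
        have hc' : c' = 0 := by
          have h1 : l*c'^2 = 0 := by rw [← hq, hb']; ring
          rcases mul_eq_zero.mp h1 with h|h
          · exact absurd h hl
          · exact pow_eq_zero_iff (n := 2) (by norm_num) |>.mp h
        rw [hc, hc']; ring
      · have key : l*c*(a*c' - a'*c) = 0 := by linear_combination a'*hp - a*ha'b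
        rcases mul_eq_zero.mp key with h|h
        · rcases mul_eq_zero.mp h with h|h
          exacts [absurd h hl, absurd h hc]
        · have h' : a*c' = a'*c := by linear_combination h
          field_simp
          linear_combination h'

/-- Let `x, y` be extremal elements of `𝔤` (char F ≠ 2) with `g(x,y) ≠ 0`,
so `⟨x,y⟩ ≅ sl₂(F)` is spanned by `g(x,y)x, y, ⁅x,y⁆`. A nonzero element
`α g(x,y)•x + β•y + γ•⁅x,y⁆` is extremal if and only if `αβ = γ²` (so the extremal
points of `⟨x,y⟩` form a conic), and every projective line of the plane on `⟨x,y⟩`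
meets the set of extremal points in at most two points (no three distinct extremal
points of the plane are collinear). -/
theorem stmt19 {F L : Type*} [Field F] [LieRing L] [LieAlgebra F L]
    (h2 : (2 : F) ≠ 0)
    (g : L →ₗ[F] L →ₗ[F] F)
    (x y : L) (hx : x ≠ 0) (hy : y ≠ 0)
    (hxe : ∀ w : L, ⁅x, ⁅x, w⁆⁆ = (2 * g x w) • x)
    (hye : ∀ w : L, ⁅y, ⁅y, w⁆⁆ = (2 * g y w) • y)
    (hg : g x y ≠ 0) :
    (∀ α β γ : F, (α * g x y) • x + β • y + γ • ⁅x, y⁆ ≠ 0 →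
      (((∀ w : L, ∃ c : F,
          ⁅(α * g x y) • x + β • y + γ • ⁅x, y⁆,
            ⁅(α * g x y) • x + β • y + γ • ⁅x, y⁆, w⁆⁆
          = c • ((α * g x y) • x + β • y + γ • ⁅x, y⁆))) ↔ α * β = γ ^ 2)) ∧
    (∀ p q r : L,
      p ∈ Submodule.span F {x, y, ⁅x, y⁆} →
      q ∈ Submodule.span F {x, y, ⁅x, y⁆} →
      r ∈ Submodule.span F {x, y, ⁅x, y⁆} →
      p ≠ 0 → q ≠ 0 → r ≠ 0 →
      (∀ w : L, ∃ c : F, ⁅p, ⁅p, w⁆⁆ = c • p) →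
      (∀ w : L, ∃ c : F, ⁅q, ⁅q, w⁆⁆ = c • q) →
      (∀ w : L, ∃ c : F, ⁅r, ⁅r, w⁆⁆ = c • r) →
      (¬∃ c : F, q = c • p) → (¬∃ c : F, r = c • p) → (¬∃ c : F, r = c • q) →
      r ∉ Submodule.span F {p, q}) := by
  have h2l : 2 * g x y ≠ 0 := mul_ne_zero h2 hg
  have hxh : ⁅x, ⁅x,y⁆⁆ = (2 * g x y) • x := hxe y
  have hxyne : ⁅x,y⁆ ≠ 0 := by
    intro h0
    apply hx
    have h1 := hxe y
    rw [h0, lie_zero] at h1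
    rcases smul_eq_zero.mp h1.symm with h|h
    · exact absurd h h2l
    · exact h
  have hyx : ⁅y,x⁆ = -⁅x,y⁆ := by
    rw [← lie_skew x y]; exact (neg_neg _).symm
  have hgyx : g y x = g x y := by
    have h1 := hye x
    rw [hyx, lie_neg, neg_eq_iff_eq_neg] at h1
    -- h1 : ⁅y,⁅x,y⁆⁆ = -((2 * g y x) • y)
    have b1 : ⁅⁅x,y⁆,x⁆ = -((2 * g x y) • x) := by
      have h3 := lie_skew x ⁅x,y⁆
      rw [hxh] at h3
      linear_combination (norm := module) -h3
    have b2 : ⁅⁅x,y⁆,y⁆ = (2 * g y x) • y := by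
      have h3 := lie_skew y ⁅x,y⁆
      rw [h1] at h3
      linear_combination (norm := module) -h3
    have e := leibniz_lie ⁅x,y⁆ x y
    rw [lie_self, b1, b2, neg_lie, smul_lie, lie_smul] at e
    have key : (2 * g y x - 2 * g x y) • ⁅x,y⁆ = 0 := by
      linear_combination (norm := module) -e
    rcases smul_eq_zero.mp key with h|h
    · have h4 : 2 * (g y x - g x y) = 0 := by linear_combination h
      rcases mul_eq_zero.mp h4 with h5|h5
      · exact absurd h5 h2
      · linear_combination h5
    · exact absurd h hxyne
  have hyxy : ⁅y, ⁅x,y⁆⁆ = -((2 * g x y) • y) := by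
    have h1 := hye x
    rw [hyx, lie_neg, hgyx] at h1
    linear_combination (norm := module) -h1
  -- linear independence of x, y, ⁅x,y⁆
  have hind : ∀ c₁ c₂ c₃ : F, c₁•x + c₂•y + c₃•⁅x,y⁆ = 0 → c₁ = 0 ∧ c₂ = 0 ∧ c₃ = 0 := by
    intro c₁ c₂ c₃ hE
    have e1 : c₂ • ⁅x,y⁆ + (c₃ * (2 * g x y)) • x = 0 := by
      have h' : ⁅x, c₁•x + c₂•y + c₃•⁅x,y⁆⁆ = 0 := by rw [hE, lie_zero]
      rw [lie_add, lie_add, lie_smul, lie_smul, lie_smul, lie_self, hxh] at h'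
      linear_combination (norm := module) h'
    have e2 : (c₂ * (2 * g x y)) • x = 0 := by
      have h' : ⁅x, c₂ • ⁅x,y⁆ + (c₃ * (2 * g x y)) • x⁆ = 0 := by rw [e1, lie_zero]
      rw [lie_add, lie_smul, lie_smul, lie_self, hxh] at h'
      linear_combination (norm := module) h'
    have hc2 : c₂ = 0 := by
      rcases smul_eq_zero.mp e2 with h|h
      · rcases mul_eq_zero.mp h with h|h
        · exact h
        · exact absurd h h2l
      · exact absurd h hx
    have hc3 : c₃ = 0 := by
      rw [hc2, zero_smul, zero_add] at e1
      rcases smul_eq_zero.mp e1 with h|h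
      · rcases mul_eq_zero.mp h with h|h
        · exact h
        · exact absurd h h2l
      · exact absurd h hx
    have hc1 : c₁ = 0 := by
      rw [hc2, hc3, zero_smul, zero_smul, add_zero, add_zero] at hE
      rcases smul_eq_zero.mp hE with h|h
      · exact h
      · exact absurd h hx
    exact ⟨hc1, hc2, hc3⟩
  -- bracket computations with a generic element of the plane
  have b1 : ⁅⁅x,y⁆,x⁆ = -((2 * g x y) • x) := by
    have h3 := lie_skew x ⁅x,y⁆
    rw [hxh] at h3
    linear_combination (norm := module) -h3
  have b2 : ⁅⁅x,y⁆,y⁆ = (2 * g x y) • y := by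
    have h3 := lie_skew y ⁅x,y⁆
    rw [hyxy] at h3
    linear_combination (norm := module) -h3
  have hvh : ∀ a b c : F, ⁅a•x + b•y + c•⁅x,y⁆, ⁅x,y⁆⁆
      = (a*(2*g x y))•x + (-(b*(2*g x y)))•y := by
    intro a b c
    rw [add_lie, add_lie, smul_lie, smul_lie, smul_lie, lie_self, hxh, hyxy]
    module
  have hvx : ∀ a b c : F, ⁅a•x + b•y + c•⁅x,y⁆, x⁆
      = (-(c*(2*g x y)))•x + (-b)•⁅x,y⁆ := by
    intro a b c
    rw [add_lie, add_lie, smul_lie, smul_lie, smul_lie, lie_self, hyx, b1]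
    module
  have hvy : ∀ a b c : F, ⁅a•x + b•y + c•⁅x,y⁆, y⁆
      = a•⁅x,y⁆ + (c*(2*g x y))•y := by
    intro a b c
    rw [add_lie, add_lie, smul_lie, smul_lie, smul_lie, lie_self, b2]
    module
  -- the conic condition: extremal implies a*b = l*c^2
  have hconic : ∀ a b c : F,
      (∀ w : L, ∃ s : F, ⁅a•x + b•y + c•⁅x,y⁆, ⁅a•x + b•y + c•⁅x,y⁆, w⁆⁆
        = s • (a•x + b•y + c•⁅x,y⁆)) →
      a * b = g x y * c^2 := by
    intro a b c he
    obtain ⟨s, hs⟩ := he x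
    obtain ⟨s', hs'⟩ := he y
    have Ex : ⁅a•x + b•y + c•⁅x,y⁆, ⁅a•x + b•y + c•⁅x,y⁆, x⁆⁆
        = (4*(g x y)^2*c^2 - 2*(g x y)*a*b)•x + (2*(g x y)*b^2)•y
          + (2*(g x y)*b*c)•⁅x,y⁆ := by
      rw [hvx a b c, lie_add, lie_smul, lie_smul, hvx a b c, hvh a b c]
      module
    have Ey : ⁅a•x + b•y + c•⁅x,y⁆, ⁅a•x + b•y + c•⁅x,y⁆, y⁆⁆
        = (2*(g x y)*a^2)•x + (4*(g x y)^2*c^2 - 2*(g x y)*a*b)•y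
          + (2*(g x y)*a*c)•⁅x,y⁆ := by
      rw [hvy a b c, lie_add, lie_smul, lie_smul, hvh a b c, hvy a b c]
      module
    have cx := hind (4*(g x y)^2*c^2 - 2*(g x y)*a*b - s*a) (2*(g x y)*b^2 - s*b)
      (2*(g x y)*b*c - s*c) (by linear_combination (norm := module) hs - Ex)
    have cy := hind (2*(g x y)*a^2 - s'*a) (4*(g x y)^2*c^2 - 2*(g x y)*a*b - s'*b)
      (2*(g x y)*a*c - s'*c) (by linear_combination (norm := module) hs' - Ey)
    have h4 : (4:F) ≠ 0 := by
      have h44 : (4:F) = 2*2 := by norm_num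
      rw [h44]; exact mul_ne_zero h2 h2
    by_cases hb : b = 0
    · have hcc : c = 0 := by
        have h1 := cy.2.1
        rw [hb] at h1
        have hc2 : (4*(g x y)^2) * c^2 = 0 := by linear_combination h1
        rcases mul_eq_zero.mp hc2 with h|h
        · rcases mul_eq_zero.mp h with h|h
          · exact absurd h h4
          · exact absurd h (pow_ne_zero 2 hg)
        · exact pow_eq_zero_iff (n := 2) (by norm_num) |>.mp h
      rw [hb, hcc]; ring
    · have hseq : s = 2*(g x y)*b := by
        have h1 := cx.2.1
        have h3 : (2*(g x y)*b - s)*b = 0 := by linear_combination h1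
        rcases mul_eq_zero.mp h3 with h|h
        · linear_combination -h
        · exact absurd h hb
      have h1 := cx.1
      rw [hseq] at h1
      have h3 : (4*(g x y))*(a*b - (g x y)*c^2) = 0 := by linear_combination -h1
      rcases mul_eq_zero.mp h3 with h|h
      · exact absurd h (mul_ne_zero h4 hg)
      · linear_combination h
  -- Premet identity for y
  have hprem : ∀ u v : L, ⁅⁅y,u⁆,⁅y,v⁆⁆
      = (g y ⁅u,v⁆)•y - (g y u)•⁅y,v⁆ + (g y v)•⁅y,u⁆ := by
    intro u v
    have base := hye ⁅u,v⁆
    have huy : ⁅u,y⁆ = -⁅y,u⁆ := by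
      rw [← lie_skew y u]; exact (neg_neg _).symm
    have expand : ⁅y,⁅y,⁅u,v⁆⁆⁆
        = (2 * g y u)•⁅y,v⁆ + ((2:F)•⁅⁅y,u⁆,⁅y,v⁆⁆ + (2 * g y v)•⁅u,y⁆) := by
      rw [leibniz_lie y u v, lie_add, leibniz_lie y ⁅y,u⁆ v, leibniz_lie y u ⁅y,v⁆,
        hye u, hye v, smul_lie, lie_smul]
      module
    rw [huy] at expand
    rw [base] at expand
    refine smul_right_injective L h2 ?_
    linear_combination (norm := module) -expand
  have hgyy : g y y = 0 := by
    have h1 := hye y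
    rw [lie_self, lie_zero] at h1
    rcases smul_eq_zero.mp h1.symm with h|h
    · rcases mul_eq_zero.mp h with h|h
      · exact absurd h h2
      · exact h
    · exact absurd h hy
  have hgybr : ∀ w : L, g y ⁅y,w⁆ = 0 := by
    intro w
    have h1 := hye ⁅y,w⁆
    rw [hye w, lie_smul, lie_self, smul_zero] at h1
    rcases smul_eq_zero.mp h1.symm with h|h
    · rcases mul_eq_zero.mp h with h|h
      · exact absurd h h2
      · exact h
    · exact absurd h hy
  -- exp(t ad y) is an automorphism
  have haut : ∀ (t : F) (u v : L),
      ⁅u + t•⁅y,u⁆ + (t^2 * g y u)•y, v + t•⁅y,v⁆ + (t^2 * g y v)•y⁆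
        = ⁅u,v⁆ + t•⁅y,⁅u,v⁆⁆ + (t^2 * g y ⁅u,v⁆)•y := by
    intro t u v
    have huy : ⁅u,y⁆ = -⁅y,u⁆ := by
      rw [← lie_skew y u]; exact (neg_neg _).symm
    have hby : ⁅⁅y,u⁆,y⁆ = -((2 * g y u)•y) := by
      have h3 := lie_skew y ⁅y,u⁆
      rw [hye u] at h3
      linear_combination (norm := module) -h3
    simp only [add_lie, lie_add, smul_lie, lie_smul, lie_self, smul_zero, add_zero]
    rw [hprem u v, hye v, hby, huy, leibniz_lie y u v]
    module
  -- exp(t ad y) ∘ exp(-t ad y) = id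
  have hinv : ∀ (t : F) (w : L),
      (w - t•⁅y,w⁆ + (t^2 * g y w)•y) + t•⁅y, w - t•⁅y,w⁆ + (t^2 * g y w)•y⁆
        + (t^2 * g y (w - t•⁅y,w⁆ + (t^2 * g y w)•y))•y = w := by
    intro t w
    have hbr : ⁅y, w - t•⁅y,w⁆ + (t^2 * g y w)•y⁆ = ⁅y,w⁆ - (t*(2*g y w))•y := by
      rw [lie_add, lie_sub, lie_smul, lie_smul, hye w, lie_self]
      module
    have hgv : g y (w - t•⁅y,w⁆ + (t^2 * g y w)•y) = g y w := by
      simp [map_add, map_sub, map_smul, hgybr w, hgyy, smul_eq_mul]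
    rw [hbr, hgv]
    module
  constructor
  · -- Part 1
    intro α β γ hzne
    constructor
    · intro he
      have h := hconic (α * g x y) β γ he
      exact mul_left_cancel₀ hg (by linear_combination h)
    · intro habg
      by_cases hα : α = 0
      · have hγ2 : γ^2 = 0 := by rw [← habg, hα, zero_mul]
        have hγ : γ = 0 := pow_eq_zero_iff (n := 2) (by norm_num) |>.mp hγ2
        intro w
        refine ⟨β * (2 * g y w), ?_⟩
        have hzy : (α * g x y)•x + β•y + γ•⁅x,y⁆ = β•y := by
          rw [hα, hγ]; module
        rw [hzy, smul_lie, smul_lie, lie_smul, hye w]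
        module
      · have hαl : α * g x y ≠ 0 := mul_ne_zero hα hg
        set t := -(γ / (α * g x y)) with htdef
        have hzX : (α * g x y)•x + β•y + γ•⁅x,y⁆
            = (α * g x y) • (x + t•⁅y,x⁆ + (t^2 * g y x)•y) := by
          rw [hyx, hgyx]
          match_scalars
          · ring
          · rw [htdef]
            field_simp
            linear_combination habg
          · rw [htdef]
            field_simp
        intro w
        set W := w - t•⁅y,w⁆ + (t^2 * g y w)•y with hW
        have hw : W + t•⁅y,W⁆ + (t^2 * g y W)•y = w := by
          rw [hW]; exact hinv t w
        refine ⟨(α * g x y) * (2 * g x W), ?_⟩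
        have step1 : ⁅x + t•⁅y,x⁆ + (t^2 * g y x)•y, w⁆
            = ⁅x,W⁆ + t•⁅y,⁅x,W⁆⁆ + (t^2 * g y ⁅x,W⁆)•y := by
          conv_lhs => rw [← hw]
          exact haut t x W
        have step2 : ⁅x + t•⁅y,x⁆ + (t^2 * g y x)•y,
              ⁅x,W⁆ + t•⁅y,⁅x,W⁆⁆ + (t^2 * g y ⁅x,W⁆)•y⁆
            = (2 * g x W) • (x + t•⁅y,x⁆ + (t^2 * g y x)•y) := by
          rw [haut t x ⁅x,W⁆, hxe W, lie_smul, map_smul, smul_eq_mul]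
          module
        rw [hzX, smul_lie, smul_lie, lie_smul, step1, step2]
        module
  · -- Part 2
    intro p q r hp hq hr hp0 hq0 hr0 hpe hqe hre hqp hrp hrq hmem
    have hcoord : ∀ v : L, v ∈ Submodule.span F {x, y, ⁅x,y⁆} →
        ∃ a b c : F, v = a•x + b•y + c•⁅x,y⁆ := by
      intro v hv
      rw [Submodule.mem_span_insert] at hv
      obtain ⟨a, u, hu, hveq⟩ := hv
      rw [Submodule.mem_span_pair] at hu
      obtain ⟨b, c, hbc⟩ := hu
      exact ⟨a, b, c, by rw [hveq, ← hbc]; module⟩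
    obtain ⟨a₁,b₁,c₁,hpeq⟩ := hcoord p hp
    obtain ⟨a₂,b₂,c₂,hqeq⟩ := hcoord q hq
    have Qp : a₁*b₁ = g x y * c₁^2 := hconic a₁ b₁ c₁ (by rw [← hpeq]; exact hpe)
    have Qq : a₂*b₂ = g x y * c₂^2 := hconic a₂ b₂ c₂ (by rw [← hqeq]; exact hqe)
    obtain ⟨s, t, hst⟩ := Submodule.mem_span_pair.mp hmem
    have hreq : r = (s*a₁+t*a₂)•x + (s*b₁+t*b₂)•y + (s*c₁+t*c₂)•⁅x,y⁆ := by
      rw [← hst, hpeq, hqeq]; module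
    have Qr : (s*a₁+t*a₂)*(s*b₁+t*b₂) = g x y * (s*c₁+t*c₂)^2 :=
      hconic _ _ _ (by rw [← hreq]; exact hre)
    have hs0 : s ≠ 0 := by
      intro h0
      exact hrq ⟨t, by rw [← hst, h0, zero_smul, zero_add]⟩
    have ht0 : t ≠ 0 := by
      intro h0
      exact hrp ⟨s, by rw [← hst, h0, zero_smul, add_zero]⟩
    have hBzero : a₁*b₂ + a₂*b₁ = 2*(g x y * (c₁*c₂)) := by
      have h1 : s*t*((a₁*b₂ + a₂*b₁) - 2*(g x y*(c₁*c₂))) = 0 := by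
        linear_combination Qr - s^2*Qp - t^2*Qq
      rcases mul_eq_zero.mp h1 with h|h
      · rcases mul_eq_zero.mp h with h|h
        exacts [absurd h hs0, absurd h ht0]
      · linear_combination h
    have hpnz : ¬(a₁ = 0 ∧ b₁ = 0 ∧ c₁ = 0) := by
      rintro ⟨e1,e2,e3⟩
      refine hp0 ?_
      rw [hpeq, e1, e2, e3]
      module
    obtain ⟨μ, hμa, hμb, hμc⟩ := prop19 h2 (g x y) a₁ b₁ c₁ a₂ b₂ c₂ hg Qp Qq hBzero hpnz
    refine hqp ⟨μ, ?_⟩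
    rw [hqeq, hpeq, hμa, hμb, hμc]
    module
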